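/- Every graph of tree-width at most k has acyclic chromatic number at most k+1. -/

import Mathlib

open SimpleGraph

/-- Edge `e'` is (strictly) nested inside edge `e` with respect to the vertex order `f`. -/
def NestedIn {V : Type*} (f : V → ℕ) (e e' : Sym2 V) : Prop :=
  ∃ u v u' v', e = s(u, v) ∧ e' = s(u', v') ∧
    f u < f u' ∧ f u' < f v' ∧ f v' < f v

/-- Two edges are nested (one inside the other) with respect to the vertex order `f`. -/
def NestedPair {V : Type*} (f : V → ℕ) (e e' : Sym2 V) : Prop :=
  NestedIn f e e' ∨ NestedIn f e' e

/-- `f` (an injective map to `ℕ`, i.e. a linear order on the vertices) together with the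
queue assignment `c` is a queue layout of `G` with at most `q` queues: edges in the same
queue are never nested. -/
def IsQueueLayout {V : Type*} (G : SimpleGraph V) (f : V → ℕ) (q : ℕ)
    (c : Sym2 V → ℕ) : Prop :=
  Function.Injective f ∧ (∀ e ∈ G.edgeSet, c e < q) ∧
    ∀ e ∈ G.edgeSet, ∀ e' ∈ G.edgeSet, c e = c e' → ¬ NestedPair f e e'

/-- `G` admits a queue layout with at most `q` queues. -/
def HasQueueLayout {V : Type*} (G : SimpleGraph V) (q : ℕ) : Prop :=
  ∃ f c, IsQueueLayout G f q c

/-- The queue-number of `G`. -/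
noncomputable def queueNumber {V : Type*} (G : SimpleGraph V) : ℕ :=
  sInf {q | HasQueueLayout G q}

/-- There exist `m` edges of `G` forming a rainbow (pairwise nested family)
`a 0 < a 1 < ⋯ < a (m-1) < b (m-1) < ⋯ < b 1 < b 0` with respect to `f`. -/
def Rainbow {V : Type*} (G : SimpleGraph V) (f : V → ℕ) (m : ℕ) : Prop :=
  ∃ a b : Fin m → V, (∀ i, G.Adj (a i) (b i)) ∧
    (∀ i j, i < j → f (a i) < f (a j)) ∧
    (∀ i j, i < j → f (b j) < f (b i)) ∧
    (∀ i j, f (a i) < f (b j))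

/-- `G` admits a track layout with at most `t` tracks: a partition of the vertices into
independent tracks, linearly ordered (via the global injective order `f`), with no
X-crossing between any two tracks. -/
def HasTrackLayout {V : Type*} (G : SimpleGraph V) (t : ℕ) : Prop :=
  ∃ (track : V → ℕ) (f : V → ℕ), Function.Injective f ∧
    (∀ v, track v < t) ∧
    (∀ u v, G.Adj u v → track u ≠ track v) ∧
    (∀ a b c d, G.Adj a b → G.Adj c d → track a = track c → track b = track d →
      f a < f c → ¬ f d < f b)

/-- The track-number of `G`. -/
noncomputable def trackNumber {V : Type*} (G : SimpleGraph V) : ℕ :=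
  sInf {t | HasTrackLayout G t}

/-- `G` is a `k`-tree (Reed's definition): it can be built from the empty graph by
repeatedly adding a vertex whose neighbourhood at the time of addition is a clique of
size at most `k`.  Equivalently (for finite graphs), there is a construction order `f`
in which the earlier neighbourhood of every vertex is a clique of size at most `k`. -/
def IsKTree {V : Type*} (k : ℕ) (G : SimpleGraph V) : Prop :=
  ∃ f : V → ℕ, Function.Injective f ∧
    ∀ v, G.IsClique {u | G.Adj u v ∧ f u < f v} ∧
      {u | G.Adj u v ∧ f u < f v}.ncard ≤ k

/-- `G` has tree-width at most `k`, i.e. it is a (spanning) subgraph of a `k`-tree. -/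
def TreewidthAtMost {V : Type*} (G : SimpleGraph V) (k : ℕ) : Prop :=
  ∃ H : SimpleGraph V, G ≤ H ∧ IsKTree k H

/-- `G` has an acyclic coloring with at most `n` colors: a proper coloring such that the
union of any two color classes induces a forest. -/
def HasAcyclicColoring {V : Type*} (G : SimpleGraph V) (n : ℕ) : Prop :=
  ∃ c : V → ℕ, (∀ v, c v < n) ∧ (∀ u v, G.Adj u v → c u ≠ c v) ∧
    ∀ i j, (G.induce {v | c v = i ∨ c v = j}).IsAcyclic


/-- Greedy coloring along order `f`. -/
noncomputable def kcol {V : Type*} [Fintype V] (H : SimpleGraph V) (f : V → ℕ) (k : ℕ)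
    (v : V) : ℕ :=
  sInf {n | n < k + 1 ∧ ∀ u, H.Adj u v → ∀ _hlt : f u < f v, kcol H f k u ≠ n}
termination_by f v
decreasing_by assumption

lemma kcol_spec {V : Type*} [Fintype V] (H : SimpleGraph V) (f : V → ℕ) (k : ℕ) (v : V)
    (hv : {u | H.Adj u v ∧ f u < f v}.ncard ≤ k) :
    kcol H f k v < k + 1 ∧
      ∀ u, H.Adj u v → f u < f v → kcol H f k u ≠ kcol H f k v := by
  classical
  set T := {n | n < k + 1 ∧ ∀ u, H.Adj u v → ∀ _hlt : f u < f v, kcol H f k u ≠ n} with hT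
  have hne : T.Nonempty := by
    set S : Set V := {u | H.Adj u v ∧ f u < f v} with hS
    have hfin : S.Finite := Set.toFinite _
    set img : Finset ℕ := hfin.toFinset.image (kcol H f k) with himg
    have hcard : img.card ≤ k := by
      calc img.card ≤ hfin.toFinset.card := Finset.card_image_le
        _ = S.ncard := (Set.ncard_eq_toFinset_card S hfin).symm
        _ ≤ k := hv
    have : ¬ (Finset.range (k+1) ⊆ img) := by
      intro hsub
      have := Finset.card_le_card hsub
      simp only [Finset.card_range] at this
      omega
    obtain ⟨n, hn1, hn2⟩ := Finset.not_subset.mp this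
    refine ⟨n, Finset.mem_range.mp hn1, fun u hadj hlt hc => hn2 ?_⟩
    exact Finset.mem_image.mpr ⟨u, hfin.mem_toFinset.mpr ⟨hadj, hlt⟩, hc⟩
  have hmem : kcol H f k v ∈ T := by
    rw [kcol]
    exact Nat.sInf_mem hne
  exact ⟨hmem.1, fun u hadj hlt => hmem.2 u hadj hlt⟩

lemma acyclic_of_unique_pred {W : Type*} (G : SimpleGraph W) (f : W → ℕ)
    (hf : Function.Injective f)
    (h : ∀ v u w, G.Adj u v → G.Adj w v → f u < f v → f w < f v → u = w) :
    G.IsAcyclic := by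
  classical
  intro v p hp
  obtain ⟨m, hm, hmax⟩ : ∃ m ∈ p.support.toFinset, ∀ a ∈ p.support.toFinset, f a ≤ f m :=
    Finset.exists_max_image _ f ⟨v, List.mem_toFinset.mpr p.start_mem_support⟩
  rw [List.mem_toFinset] at hm
  set c := p.rotate m hm with hcdef
  have hc : c.IsCycle := hp.rotate hm
  have hmax' : ∀ a ∈ c.support, f a ≤ f m := by
    intro a ha
    have htail : c.support.tail ~r p.support.tail := Walk.support_rotate p m hm
    rcases List.eq_or_mem_of_mem_cons (by rwa [c.support_eq_cons] at ha) with rfl | ha'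
    · exact le_refl _
    · have : a ∈ p.support.tail := htail.mem_iff.mp ha'
      exact hmax a (List.mem_toFinset.mpr (by rw [p.support_eq_cons]; exact List.mem_cons_of_mem _ this))
  obtain ⟨u, hadj, q, hq⟩ := Walk.not_nil_iff.mp hc.not_nil
  have h3 : 3 ≤ c.length := hc.three_le_length
  have hqn : ¬ q.Nil := by
    rw [Walk.not_nil_iff_lt_length]
    have : c.length = q.length + 1 := by rw [hq]; simp
    omega
  have hqrn : ¬ q.reverse.Nil := by
    rw [Walk.not_nil_iff_lt_length, Walk.length_reverse]
    rwa [Walk.not_nil_iff_lt_length] at hqn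
  obtain ⟨w, hadj', r, hr⟩ := Walk.not_nil_iff.mp hqrn
  -- u, w ∈ c.support
  have hu : u ∈ c.support := by rw [hq]; simp
  have hwq : w ∈ q.support := by
    have : w ∈ q.reverse.support := by rw [hr]; simp
    rwa [Walk.support_reverse, List.mem_reverse] at this
  have hw : w ∈ c.support := by rw [hq]; simp [hwq]
  have hum : f u < f m :=
    lt_of_le_of_ne (hmax' u hu) (fun he => hadj.ne' (hf he))
  have hwm : f w < f m :=
    lt_of_le_of_ne (hmax' w hw) (fun he => hadj'.ne' (hf he))
  have huw : u = w := h m u w hadj.symm hadj'.symm hum hwm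
  -- derive contradiction: r is a closed walk with nodup support
  have hnodup : q.support.Nodup := by
    have := hc.support_nodup
    rwa [hq, Walk.support_cons, List.tail_cons] at this
  have hrnodup : r.support.Nodup := by
    have h1 : q.reverse.support.Nodup := by
      rw [Walk.support_reverse]; exact List.nodup_reverse.mpr hnodup
    rw [hr, Walk.support_cons] at h1
    exact h1.of_cons
  subst huw
  have : r = Walk.nil := (Walk.isPath_iff_eq_nil (p := r)).mp ((Walk.isPath_def r).mpr hrnodup)
  have hql : q.length = 1 := by
    have : q.reverse.length = 1 := by rw [hr, this]; simp
    rwa [Walk.length_reverse] at this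
  have : c.length = q.length + 1 := by rw [hq]; simp
  omega

/-- Every graph of tree-width at most `k` has acyclic chromatic number at most `k+1`. -/
theorem stmt_8 {V : Type*} [Fintype V] (k : ℕ) (G : SimpleGraph V)
    (h : TreewidthAtMost G k) :
    HasAcyclicColoring G (k + 1) := by
  classical
  obtain ⟨H, hGH, f, hf, hcl⟩ := h
  set c := kcol H f k with hcdef
  have spec : ∀ v, c v < k + 1 ∧ ∀ u, H.Adj u v → f u < f v → c u ≠ c v :=
    fun v => kcol_spec H f k v (hcl v).2
  have hproper : ∀ u v, H.Adj u v → c u ≠ c v := by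
    intro u v hadj
    rcases lt_or_gt_of_ne (fun he => hadj.ne (hf he)) with hlt | hlt
    · exact (spec v).2 u hadj hlt
    · exact fun he => (spec u).2 v hadj.symm hlt he.symm
  refine ⟨c, fun v => (spec v).1, fun u v huv => hproper u v (hGH huv), ?_⟩
  intro i j
  apply acyclic_of_unique_pred _ (fun x => f x.val) (fun a b hab => Subtype.ext (hf hab))
  rintro ⟨v, hv⟩ ⟨u, hu⟩ ⟨w, hw⟩ hadj1 hadj2 h1 h2
  simp only [comap_adj, Function.Embedding.coe_subtype] at hadj1 hadj2
  simp only at h1 h2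
  by_contra hne
  have hne' : u ≠ w := fun he => hne (Subtype.ext he)
  have hu' : H.Adj u v := hGH hadj1
  have hw' : H.Adj w v := hGH hadj2
  have hadjuw : H.Adj u w := (hcl v).1 ⟨hu', h1⟩ ⟨hw', h2⟩ hne'
  have h1' : c u ≠ c v := (spec v).2 u hu' h1
  have h2' : c w ≠ c v := (spec v).2 w hw' h2
  have huw : c u ≠ c w := hproper u w hadjuw
  simp only [Set.mem_setOf_eq] at hv hu hw
  rcases hv with hv | hv <;> rcases hu with hu | hu <;> rcases hw with hw | hw <;> omega
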